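/- If a chord diagram τ of order n contains a chord diagram P of order k (as an induced sub-diagram on some set of k of its chords, up to rotation), then k + 1 − F(P) ≤ n + 1 − F(τ). In particular, if τ is realizable on the torus (n + 1 − F(τ) ≤ 2), then so is every diagram it contains. -/

import Mathlib

/-- Strict cyclic betweenness on the cyclic group with `m` elements (`ZMod m`, realized as
`Fin m` so that the group is empty when `m = 0`): `b` lies on the open cyclic arc
from `a` to `c`. -/
def cyclicSbtw {m : ℕ} (a b c : Fin m) : Prop :=
  0 < (b.val + (m - a.val)) % m ∧ (b.val + (m - a.val)) % m < (c.val + (m - a.val)) % m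

/-- A chord diagram of order `n`: a fixed-point-free involution `τ` of the cyclic group
with `2n` elements (`ZMod (2n)`, realized as `Fin (2n)`); its chords are the pairs
`{i, τ i}`. -/
structure ChordDiagram (n : ℕ) where
  τ : Equiv.Perm (Fin (2 * n))
  invol : ∀ i, τ (τ i) = i
  fpf : ∀ i, τ i ≠ i

namespace ChordDiagram

/-- The boundary permutation `φ(i) = τ(i) + 1`. -/
def boundary {n : ℕ} (D : ChordDiagram n) : Equiv.Perm (Fin (2 * n)) :=
  D.τ.trans (finRotate (2 * n))

/-- The number `F` of boundary components: the number of orbits of the boundary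
permutation, with the convention `F = 1` when `n = 0`. -/
noncomputable def F {n : ℕ} (D : ChordDiagram n) : ℕ :=
  if n = 0 then 1
  else Nat.card (Quotient (MulAction.orbitRel (Subgroup.zpowers D.boundary) (Fin (2 * n))))

/-- Build a chord diagram from an involutive, fixed-point-free function. -/
def ofInvol {n : ℕ} (f : Fin (2 * n) → Fin (2 * n)) (h : Function.Involutive f)
    (hf : ∀ i, f i ≠ i) : ChordDiagram n :=
  ⟨Function.Involutive.toPerm f h, h, hf⟩

/-- The empty chord diagram (order 0). -/
def emptyDiagram : ChordDiagram 0 := ⟨1, fun i => i.elim0, fun i => i.elim0⟩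

/-- The chord diagram `(abab)`: chords `{0,2}, {1,3}` on `ZMod 4`. -/
def abab : ChordDiagram 2 := ofInvol ![2, 3, 0, 1] (by intro x; fin_cases x <;> rfl) (by decide)

/-- The chord diagram `(abcabc)`: chords `{0,3}, {1,4}, {2,5}` on `ZMod 6`. -/
def abcabc : ChordDiagram 3 :=
  ofInvol ![3, 4, 5, 0, 1, 2] (by intro x; fin_cases x <;> rfl) (by decide)

/-- The forbidden diagram `(ababcdcd)`: chords `{0,2},{1,3},{4,6},{5,7}` on `ZMod 8`. -/
def ababcdcd : ChordDiagram 4 :=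
  ofInvol ![2, 3, 0, 1, 6, 7, 4, 5] (by intro x; fin_cases x <;> rfl) (by decide)

/-- The forbidden diagram `(abcdabcd)`: chords `{0,4},{1,5},{2,6},{3,7}` on `ZMod 8`. -/
def abcdabcd : ChordDiagram 4 :=
  ofInvol ![4, 5, 6, 7, 0, 1, 2, 3] (by intro x; fin_cases x <;> rfl) (by decide)

/-- The forbidden diagram `(abacdcbd)`: chords `{0,2},{1,6},{3,5},{4,7}` on `ZMod 8`. -/
def abacdcbd : ChordDiagram 4 :=
  ofInvol ![2, 6, 0, 5, 7, 3, 1, 4] (by intro x; fin_cases x <;> rfl) (by decide)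

/-- The forbidden diagram `(abcadbdc)`: chords `{0,3},{1,5},{2,7},{4,6}` on `ZMod 8`. -/
def abcadbdc : ChordDiagram 4 :=
  ofInvol ![3, 5, 7, 0, 6, 1, 4, 2] (by intro x; fin_cases x <;> rfl) (by decide)

/-- The chords `{i, τ i}` and `{j, τ j}` interlace: exactly one of `j, τ j` lies on
the open cyclic arc from `i` to `τ i`. -/
def Interlaces {n : ℕ} (D : ChordDiagram n) (i j : Fin (2 * n)) : Prop :=
  Xor' (cyclicSbtw i j (D.τ i)) (cyclicSbtw i (D.τ j) (D.τ i))

/-- The type of chords of a chord diagram. -/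
def Chord {n : ℕ} (D : ChordDiagram n) : Type :=
  {p : Sym2 (Fin (2 * n)) // ∃ i, p = s(i, D.τ i)}

/-- The interlacement graph (graph of loops) of a chord diagram: vertices are the chords,
edges are the interlacing pairs of distinct chords. -/
def interGraph {n : ℕ} (D : ChordDiagram n) : SimpleGraph D.Chord where
  Adj c d := c ≠ d ∧
    ((∃ i j, c.1 = s(i, D.τ i) ∧ d.1 = s(j, D.τ j) ∧ D.Interlaces i j) ∨
     (∃ i j, d.1 = s(i, D.τ i) ∧ c.1 = s(j, D.τ j) ∧ D.Interlaces i j))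
  symm := by
    constructor
    intro c d h
    exact ⟨h.1.symm, h.2.symm⟩
  loopless := by
    constructor
    intro c h
    exact h.1 rfl

/-- A cyclic-order-preserving injection between cyclic groups. -/
def CycEmb {k m : ℕ} (f : Fin k → Fin m) : Prop :=
  Function.Injective f ∧ ∀ a b c, cyclicSbtw a b c → cyclicSbtw (f a) (f b) (f c)

/-- `D` contains the diagram `P`: the sub-diagram of `D` induced by some set of its chords
equals `P` up to rotation, i.e. there is a cyclic-order-preserving injection
`f : ZMod (2k) → ZMod (2n)` intertwining the involutions. -/
def Contains {n k : ℕ} (D : ChordDiagram n) (P : ChordDiagram k) : Prop :=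
  ∃ f : Fin (2 * k) → Fin (2 * n), CycEmb f ∧ ∀ i, D.τ (f i) = f (P.τ i)

/-- `D'` is obtained from `D` by deleting the chord `{j, τ j}` and renumbering the
remaining `2n` endpoints by the cyclic-order-preserving bijection onto `ZMod (2n)`. -/
def DeleteChord {n : ℕ} (D : ChordDiagram (n + 1)) (j : Fin (2 * (n + 1)))
    (D' : ChordDiagram n) : Prop :=
  ∃ f : Fin (2 * n) → Fin (2 * (n + 1)), CycEmb f ∧
    Set.range f = ({j, D.τ j} : Set (Fin (2 * (n + 1))))ᶜ ∧
    ∀ i, D.τ (f i) = f (D'.τ i)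

/-- Reduction operation (α): deletion of an isolated chord `{i, i+1}` (where `τ i = i + 1`). -/
def StepAlpha {n : ℕ} (D : ChordDiagram (n + 1)) (D' : ChordDiagram n) : Prop :=
  ∃ i, D.τ i = finRotate (2 * (n + 1)) i ∧ DeleteChord D i D'

/-- Reduction operation (β): deletion of the chord `{i+1, τ(i+1)}` from a parallel pair,
i.e. `τ(i+1) = τ(i) - 1` with the chords `{i, τ i}` and `{i+1, τ(i+1)}` distinct. -/
def StepBeta {n : ℕ} (D : ChordDiagram (n + 1)) (D' : ChordDiagram n) : Prop :=
  ∃ i, D.τ (finRotate (2 * (n + 1)) i) = (finRotate (2 * (n + 1))).symm (D.τ i) ∧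
    D.τ i ≠ finRotate (2 * (n + 1)) i ∧
    DeleteChord D (finRotate (2 * (n + 1)) i) D'

/-- One reduction step (operation (α) or (β)) between chord diagrams. -/
def Step (p q : Σ n, ChordDiagram n) : Prop :=
  ∃ h : p.1 = q.1 + 1,
    StepAlpha (cast (congrArg ChordDiagram h) p.2) q.2 ∨
    StepBeta (cast (congrArg ChordDiagram h) p.2) q.2

/-- `p` reduces to `q` by finitely many operations (α), (β) (possibly none). -/
def Reduces (p q : Σ n, ChordDiagram n) : Prop := Relation.ReflTransGen Step p q

/-- `D` reduces to one of the diagrams `()`, `(abab)`, `(abcabc)`. -/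
def ReducesToBasic {n : ℕ} (D : ChordDiagram n) : Prop :=
  Reduces ⟨n, D⟩ ⟨0, emptyDiagram⟩ ∨ Reduces ⟨n, D⟩ ⟨2, abab⟩ ∨ Reduces ⟨n, D⟩ ⟨3, abcabc⟩

end ChordDiagram

/-- A simple graph is a disjoint union of a (possibly empty) set of isolated vertices and a
complete bipartite or complete tripartite graph: there are three pairwise disjoint sets
`A`, `B`, `C` of vertices (a part may be empty; `C = ∅` gives the complete bipartite case)
such that two vertices are adjacent iff they lie in two different ones of these parts;
all remaining vertices are isolated. -/
def IsIsolatedPlusCompleteMultipartite {V : Type*} (G : SimpleGraph V) : Prop :=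
  ∃ A B C : Set V, Disjoint A B ∧ Disjoint A C ∧ Disjoint B C ∧
    ∀ v w, G.Adj v w ↔
      ((v ∈ A ∧ w ∈ B) ∨ (v ∈ B ∧ w ∈ A) ∨ (v ∈ A ∧ w ∈ C) ∨ (v ∈ C ∧ w ∈ A) ∨
       (v ∈ B ∧ w ∈ C) ∨ (v ∈ C ∧ w ∈ B))


open MulAction Subgroup Equiv

namespace CGAux

variable {α : Type*} [Fintype α] [DecidableEq α]

noncomputable def orbCount (σ : Equiv.Perm α) : ℕ :=
  Nat.card (Quotient (MulAction.orbitRel (Subgroup.zpowers σ) α))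

lemma quot_eq_of_mem {G : Subgroup (Equiv.Perm α)} {g : Equiv.Perm α} (hg : g ∈ G) (x : α) :
    (Quotient.mk (MulAction.orbitRel G α) (g x)) = Quotient.mk _ x :=
  Quotient.sound ⟨⟨g, hg⟩, rfl⟩

lemma exists_pow_of_zpow (g : Equiv.Perm α) (z : ℤ) : ∃ m : ℕ, g ^ z = g ^ m := by
  have ho : 0 < orderOf g := orderOf_pos g
  refine ⟨(z % (orderOf g : ℤ)).toNat, ?_⟩
  have hnn : 0 ≤ z % (orderOf g : ℤ) := Int.emod_nonneg z (by exact_mod_cast ho.ne')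
  rw [← zpow_natCast, Int.toNat_of_nonneg hnn, zpow_mod_orderOf]

lemma rel_iff_exists_pow (σ : Equiv.Perm α) (x y : α) :
    (Quotient.mk (MulAction.orbitRel (Subgroup.zpowers σ) α) x) = Quotient.mk _ y ↔
      ∃ m : ℕ, (σ ^ m) y = x := by
  constructor
  · intro h
    obtain ⟨⟨g, hg⟩, hgx⟩ := Quotient.exact h
    obtain ⟨z, rfl⟩ := mem_zpowers_iff.mp hg
    obtain ⟨m, hm⟩ := exists_pow_of_zpow σ z
    exact ⟨m, by rw [← hm]; exact hgx⟩
  · rintro ⟨m, rfl⟩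
    exact quot_eq_of_mem (pow_mem (mem_zpowers σ) m) y

/-- Multiplying a permutation by a transposition changes orbit count by at most one (≥ dir). -/
lemma orbCount_le_mul_swap (σ : Equiv.Perm α) (a b : α) :
    orbCount σ ≤ orbCount (σ * Equiv.swap a b) + 1 := by
  classical
  rcases eq_or_ne a b with rfl | hab
  · rw [Equiv.swap_self]
    have : σ * (Equiv.refl α : Equiv.Perm α) = σ := mul_one σ
    rw [this]; omega
  set G := Subgroup.closure ({σ, Equiv.swap a b} : Set (Equiv.Perm α)) with hG
  have hσG : σ ∈ G := subset_closure (by simp)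
  have hsG : Equiv.swap a b ∈ G := subset_closure (by simp)
  have hTG : σ * Equiv.swap a b ∈ G := mul_mem hσG hsG
  -- notation for quotients
  set Qσ := Quotient (MulAction.orbitRel (Subgroup.zpowers σ) α)
  set QT := Quotient (MulAction.orbitRel (Subgroup.zpowers (σ * Equiv.swap a b)) α)
  set QG := Quotient (MulAction.orbitRel G α)
  -- step 2 : card QG ≤ card QT
  have h2 : Nat.card QG ≤ Nat.card QT := by
    have wd : ∀ x y : α,
        (MulAction.orbitRel (Subgroup.zpowers (σ * Equiv.swap a b)) α).r x y →
        (Quotient.mk (MulAction.orbitRel G α) x) = Quotient.mk _ y := by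
      intro x y hxy
      obtain ⟨⟨g, hg⟩, hgx⟩ := hxy
      have : g ∈ G := (zpowers_le.mpr hTG) hg
      rw [← hgx]; exact quot_eq_of_mem this y
    refine Nat.card_le_card_of_surjective
      (Quotient.lift (fun x : α => (Quotient.mk (MulAction.orbitRel G α) x)) wd) ?_
    intro q
    refine Quotient.inductionOn q (fun x => ⟨Quotient.mk _ x, rfl⟩)
  -- key claim K
  have hK : ∀ g ∈ G, ∀ x : α,
      (Quotient.mk (MulAction.orbitRel (Subgroup.zpowers σ) α) (g x) = Quotient.mk _ x) ∨
      (((Quotient.mk (MulAction.orbitRel (Subgroup.zpowers σ) α) (g x) = Quotient.mk _ a) ∨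
        (Quotient.mk (MulAction.orbitRel (Subgroup.zpowers σ) α) (g x) = Quotient.mk _ b)) ∧
       ((Quotient.mk (MulAction.orbitRel (Subgroup.zpowers σ) α) x = Quotient.mk _ a) ∨
        (Quotient.mk (MulAction.orbitRel (Subgroup.zpowers σ) α) x = Quotient.mk _ b))) := by
    intro g hg
    induction hg using Subgroup.closure_induction with
    | mem g hgen =>
      intro x
      rcases hgen with rfl | rfl
      · exact Or.inl (quot_eq_of_mem (mem_zpowers g) x)
      · rcases eq_or_ne x a with rfl | hxa
        · rw [Equiv.swap_apply_left]; exact Or.inr ⟨Or.inr rfl, Or.inl rfl⟩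
        rcases eq_or_ne x b with rfl | hxb
        · rw [Equiv.swap_apply_right]; exact Or.inr ⟨Or.inl rfl, Or.inr rfl⟩
        · rw [Equiv.swap_apply_of_ne_of_ne hxa hxb]; exact Or.inl rfl
    | one => intro x; exact Or.inl rfl
    | mul g h hgG hhG hgP hhP =>
      intro x
      have h1 := hhP x
      have h2 := hgP (h x)
      have hgh : (g * h) x = g (h x) := rfl
      rw [hgh]
      rcases h1 with h1 | ⟨h1a, h1b⟩
      · rcases h2 with h2 | ⟨h2a, h2b⟩
        · exact Or.inl (h2.trans h1)
        · exact Or.inr ⟨h2a, h1 ▸ h2b⟩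
      · rcases h2 with h2 | ⟨h2a, h2b⟩
        · exact Or.inr ⟨h2 ▸ h1a, h1b⟩
        · exact Or.inr ⟨h2a, h1b⟩
    | inv g hgG hgP =>
      intro x
      have := hgP (g⁻¹ x)
      have hx : g (g⁻¹ x) = x := g.apply_symm_apply x
      rw [hx] at this
      rcases this with h1 | ⟨h1a, h1b⟩
      · exact Or.inl h1.symm
      · exact Or.inr ⟨h1b, h1a⟩
  -- step 1 : card Qσ ≤ card QG + 1
  have h1 : Nat.card Qσ ≤ Nat.card QG + 1 := by
    have wd : ∀ x y : α, (MulAction.orbitRel (Subgroup.zpowers σ) α).r x y →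
        (if (Quotient.mk (MulAction.orbitRel (Subgroup.zpowers σ) α) x = Quotient.mk _ b)
          then (Sum.inr () : QG ⊕ Unit)
          else Sum.inl (Quotient.mk (MulAction.orbitRel G α) x)) =
        (if (Quotient.mk (MulAction.orbitRel (Subgroup.zpowers σ) α) y = Quotient.mk _ b)
          then (Sum.inr () : QG ⊕ Unit)
          else Sum.inl (Quotient.mk (MulAction.orbitRel G α) y)) := by
      intro x y hxy
      have hq : (Quotient.mk (MulAction.orbitRel (Subgroup.zpowers σ) α) x) = Quotient.mk _ y :=
        Quotient.sound hxy
      have hqG : (Quotient.mk (MulAction.orbitRel G α) x) = Quotient.mk _ y := by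
        obtain ⟨⟨g, hg⟩, hgx⟩ := hxy
        rw [← hgx]; exact quot_eq_of_mem ((zpowers_le.mpr hσG) hg) y
      rw [hq, hqG]
    set Φ : Qσ → QG ⊕ Unit := Quotient.lift _ wd with hΦ
    have hinj : Function.Injective Φ := by
      intro p q
      refine Quotient.inductionOn₂ p q ?_
      intro x y hxy
      simp only [hΦ, Quotient.lift_mk] at hxy
      by_cases hx : (Quotient.mk (MulAction.orbitRel (Subgroup.zpowers σ) α) x = Quotient.mk _ b)
      case pos =>
        by_cases hy : (Quotient.mk (MulAction.orbitRel (Subgroup.zpowers σ) α) y = Quotient.mk _ b)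
        case pos => exact hx.trans hy.symm
        case neg =>
          rw [if_pos hx, if_neg hy] at hxy
          exact absurd hxy (by simp)
      case neg =>
        by_cases hy : (Quotient.mk (MulAction.orbitRel (Subgroup.zpowers σ) α) y = Quotient.mk _ b)
        case pos =>
          rw [if_neg hx, if_pos hy] at hxy
          exact absurd hxy (by simp)
        case neg =>
        rw [if_neg hx, if_neg hy] at hxy
        have hxyG := Sum.inl.inj hxy
        have hrel := Quotient.exact hxyG
        obtain ⟨⟨g, hg⟩, hgy⟩ := hrel
        have := hK g hg y
        have hgxy : g y = x := hgy
        rw [hgxy] at this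
        rcases this with h | ⟨hA, hB⟩
        · exact h
        · rcases hA with hA | hA
          · rcases hB with hB | hB
            · exact hA.trans hB.symm
            · exact absurd hB hy
          · exact absurd hA hx
    calc Nat.card Qσ ≤ Nat.card (QG ⊕ Unit) := Nat.card_le_card_of_injective Φ hinj
      _ = Nat.card QG + 1 := by rw [Nat.card_sum]; simp
  have e1 : orbCount σ = Nat.card Qσ := rfl
  have e2 : orbCount (σ * Equiv.swap a b) = Nat.card QT := rfl
  omega

/-- Multiplying by an involution: orbit count changes by at most half the support. -/
lemma orbCount_le_mul_involutive :
    ∀ (N : ℕ) (μ : Equiv.Perm α), μ.support.card ≤ N → (∀ x, μ (μ x) = x) →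
    ∀ π : Equiv.Perm α, 2 * orbCount π ≤ 2 * orbCount (π * μ) + μ.support.card := by
  intro N
  induction N with
  | zero =>
    intro μ hcard hinv π
    have hs : μ.support = ∅ := Finset.card_eq_zero.mp (Nat.le_zero.mp hcard)
    have hμ : μ = 1 := Equiv.Perm.support_eq_empty_iff.mp hs
    subst hμ
    simp
  | succ N ih =>
    intro μ hcard hinv π
    rcases Finset.eq_empty_or_nonempty μ.support with hemp | ⟨a, ha⟩
    · have hμ : μ = 1 := Equiv.Perm.support_eq_empty_iff.mp hemp
      subst hμ; simp
    · set b := μ a with hb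
      have hba : b ≠ a := by
        intro h
        exact (Equiv.Perm.mem_support.mp ha) (by rw [← hb] at *; exact h)
      have hμb : μ b = a := by rw [hb, hinv]
      set μ' := μ * Equiv.swap a b with hμ'
      have hμ'app : ∀ x, μ' x = μ (Equiv.swap a b x) := fun x => rfl
      have hμ'a : μ' a = a := by rw [hμ'app, Equiv.swap_apply_left, hμb]
      have hμ'b : μ' b = b := by rw [hμ'app, Equiv.swap_apply_right, ← hb]
      have hμ'x : ∀ x, x ≠ a → x ≠ b → μ' x = μ x := by
        intro x hxa hxb
        rw [hμ'app, Equiv.swap_apply_of_ne_of_ne hxa hxb]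
      have hinv' : ∀ x, μ' (μ' x) = x := by
        intro x
        rcases eq_or_ne x a with rfl | hxa
        · rw [hμ'a, hμ'a]
        rcases eq_or_ne x b with rfl | hxb
        · rw [hμ'b, hμ'b]
        · have h1 : μ' x = μ x := hμ'x x hxa hxb
          have hμxa : μ x ≠ a := by intro h; apply hxb; rw [hb, ← h, hinv]
          have hμxb : μ x ≠ b := by
            intro h
            apply hxa
            have := congrArg μ h
            rwa [hinv, hμb] at this
          rw [h1, hμ'x _ hμxa hμxb, hinv]
      have hsupp' : μ'.support = μ.support \ {a, b} := by
        ext x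
        simp only [Equiv.Perm.mem_support, Finset.mem_sdiff, Finset.mem_insert, Finset.mem_singleton]
        constructor
        · intro hx
          rcases eq_or_ne x a with rfl | hxa
          · exact absurd hμ'a hx
          rcases eq_or_ne x b with rfl | hxb
          · exact absurd hμ'b hx
          · rw [hμ'x x hxa hxb] at hx
            exact ⟨hx, fun h => h.elim hxa hxb⟩
        · rintro ⟨hx, hxab⟩
          push_neg at hxab
          rw [hμ'x x hxab.1 hxab.2]
          exact hx
      have habs : ({a, b} : Finset α) ⊆ μ.support := by
        intro x hx
        simp only [Finset.mem_insert, Finset.mem_singleton] at hx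
        rcases hx with rfl | rfl
        · exact ha
        · exact Equiv.Perm.mem_support.mpr (by rw [hμb]; exact hba.symm)
      have hcard2 : ({a, b} : Finset α).card = 2 := Finset.card_pair hba.symm
      have hsuppcard : μ'.support.card = μ.support.card - 2 := by
        rw [hsupp', Finset.card_sdiff_of_subset habs, hcard2]
      have h2le : 2 ≤ μ.support.card := by
        rw [← hcard2]; exact Finset.card_le_card habs
      have hle' : μ'.support.card ≤ N := by omega
      have IH := ih μ' hle' hinv' π
      have hA := orbCount_le_mul_swap (π * μ') a b
      have hback : π * μ' * Equiv.swap a b = π * μ := by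
        rw [hμ', mul_assoc, mul_assoc, Equiv.swap_mul_self, mul_one]
      rw [hback] at hA
      omega

end CGAux

section MainAux

lemma CGAux.rot_apply {m : ℕ} [NeZero m] (x : Fin m) : finRotate m x = x + 1 := by
  cases m with
  | zero => exact absurd rfl (NeZero.ne 0)
  | succ m => exact finRotate_succ_apply x

lemma CGAux.cyclicSbtw_iff {m : ℕ} (a b c : Fin m) :
    cyclicSbtw a b c ↔ (0 < (b - a).val ∧ (b - a).val < (c - a).val) := by
  have h1 : (b - a).val = (b.val + (m - a.val)) % m := by
    rw [Fin.sub_def]; simp [Nat.add_comm]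
  have h2 : (c - a).val = (c.val + (m - a.val)) % m := by
    rw [Fin.sub_def]; simp [Nat.add_comm]
  rw [cyclicSbtw, h1, h2]

end MainAux

open CGAux MulAction Subgroup Fin.NatCast Fin.CommRing in
/-- If a chord diagram `D` of order `n` contains a chord diagram `P` of order `k` (as an
induced sub-diagram on some set of its chords, up to rotation), then
`k + 1 - F(P) ≤ n + 1 - F(D)`. In particular, if `D` is realizable on the torus
(`n + 1 - F(D) ≤ 2`), then so is every diagram it contains. -/
theorem contains_genus_mono (n k : ℕ) (D : ChordDiagram n) (P : ChordDiagram k)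
    (h : D.Contains P) :
    (k : ℤ) + 1 - (P.F : ℤ) ≤ (n : ℤ) + 1 - (D.F : ℤ) ∧
    ((n : ℤ) + 1 - (D.F : ℤ) ≤ 2 → (k : ℤ) + 1 - (P.F : ℤ) ≤ 2) := by
  classical
  obtain ⟨f, ⟨hinj, hmono⟩, hcomm⟩ := h
  have hkn2 : 2 * k ≤ 2 * n := by
    have := Fintype.card_le_of_injective f hinj
    simpa using this
  have key : D.F + k ≤ P.F + n := by
    rcases Nat.eq_zero_or_pos n with rfl | hn
    · have hk : k = 0 := by omega
      subst hk
      simp [ChordDiagram.F]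
    have hn0 : n ≠ 0 := hn.ne'
    haveI : NeZero (2 * n) := ⟨by omega⟩
    set R : Set (Fin (2 * n)) := Set.range f with hR
    have hRτ : ∀ x, x ∈ R → D.τ x ∈ R := by
      rintro x ⟨i, rfl⟩
      exact ⟨P.τ i, (hcomm i).symm⟩
    have hRτ' : ∀ x, D.τ x ∈ R → x ∈ R := by
      intro x hx
      have := hRτ _ hx
      rwa [D.invol] at this
    set μf : Fin (2 * n) → Fin (2 * n) := fun x => if x ∈ R then x else D.τ x with hμf
    have hμinv : Function.Involutive μf := by
      intro x
      by_cases hx : x ∈ R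
      · simp [hμf, hx]
      · have hτx : D.τ x ∉ R := fun hc => hx (hRτ' x hc)
        simp [hμf, hx, hτx, D.invol]
    set μ : Equiv.Perm (Fin (2 * n)) := hμinv.toPerm with hμ
    have hμapp : ∀ x, μ x = μf x := fun x => rfl
    set σ : Equiv.Perm (Fin (2 * n)) := D.boundary * μ with hσ
    have hbapp : ∀ x, D.boundary x = D.τ x + 1 := by
      intro x
      show finRotate (2 * n) (D.τ x) = D.τ x + 1
      exact rot_apply _
    have hσR : ∀ x ∈ R, σ x = D.τ x + 1 := by
      intro x hx
      show D.boundary (μ x) = _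
      rw [hμapp, hμf]
      simp only [hx, if_pos]
      exact hbapp x
    have hσc : ∀ x, x ∉ R → σ x = x + 1 := by
      intro x hx
      show D.boundary (μ x) = _
      rw [hμapp]
      simp only [hμf, hx, if_neg, ite_false]
      rw [hbapp, D.invol]
    -- support bound
    have hsupp : μ.support.card ≤ 2 * n - 2 * k := by
      have hsub : μ.support ⊆ (Finset.image f Finset.univ)ᶜ := by
        intro x hx
        rw [Finset.mem_compl]
        intro hmem
        rw [Finset.mem_image] at hmem
        obtain ⟨i, _, rfl⟩ := hmem
        have : μ (f i) = f i := by
          rw [hμapp]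
          show (if f i ∈ R then f i else D.τ (f i)) = f i
          rw [if_pos ⟨i, rfl⟩]
        exact (Equiv.Perm.mem_support.mp hx) this
      calc μ.support.card ≤ ((Finset.image f Finset.univ)ᶜ).card := Finset.card_le_card hsub
        _ = Fintype.card (Fin (2 * n)) - (Finset.image f Finset.univ).card :=
            Finset.card_compl _
        _ = 2 * n - 2 * k := by
            rw [Finset.card_image_of_injective _ hinj]
            simp
    have hB : 2 * orbCount D.boundary ≤ 2 * orbCount σ + μ.support.card :=
      orbCount_le_mul_involutive (μ.support.card) μ le_rfl hμinv D.boundary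
    have hFD : D.F = orbCount D.boundary := by
      rw [ChordDiagram.F, if_neg hn0]; rfl
    -- orbit count of σ is at most F P
    rcases Nat.eq_zero_or_pos k with rfl | hk
    · -- R is empty, σ is the rotation
      have hRe : ∀ x : Fin (2 * n), x ∉ R := by
        rintro x ⟨i, rfl⟩
        exact i.elim0
      have hσall : ∀ x, σ x = x + 1 := fun x => hσc x (hRe x)
      have hpow : ∀ (m : ℕ) (x : Fin (2 * n)), (σ ^ m) x = x + (m : Fin (2 * n)) := by
        intro m
        induction m with
        | zero => intro x; simp
        | succ m ih =>
          intro x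
          rw [pow_succ, Equiv.Perm.mul_apply, hσall, ih]
          push_cast
          ring
      have hone : orbCount σ = 1 := by
        rw [orbCount, Nat.card_eq_one_iff_unique]
        constructor
        · constructor
          intro p q
          refine Quotient.inductionOn₂ p q ?_
          intro x y
          have hx : (Quotient.mk (MulAction.orbitRel (Subgroup.zpowers σ) (Fin (2 * n))) x)
              = Quotient.mk _ 0 := by
            rw [rel_iff_exists_pow]
            exact ⟨x.val, by rw [hpow, Fin.cast_val_eq_self, zero_add]⟩
          have hy : (Quotient.mk (MulAction.orbitRel (Subgroup.zpowers σ) (Fin (2 * n))) y)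
              = Quotient.mk _ 0 := by
            rw [rel_iff_exists_pow]
            exact ⟨y.val, by rw [hpow, Fin.cast_val_eq_self, zero_add]⟩
          exact hx.trans hy.symm
        · exact ⟨Quotient.mk _ 0⟩
      have hFP : P.F = 1 := by rw [ChordDiagram.F, if_pos rfl]
      omega
    -- now k ≥ 1
    have hk0 : k ≠ 0 := hk.ne'
    haveI : NeZero (2 * k) := ⟨by omega⟩
    have hone2k : ((1 : Fin (2 * k))).val = 1 := by
      rw [Fin.val_one']
      exact Nat.mod_eq_of_lt (by omega)
    have hsucc_ne : ∀ x : Fin (2 * k), x + 1 ≠ x := by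
      intro x hx
      have h1 : (1 : Fin (2 * k)) = 0 := by
        have := hx
        nth_rewrite 2 [← add_zero x] at this
        exact add_left_cancel this
      have := congrArg Fin.val h1
      rw [hone2k] at this
      simp at this
    have hvalpos : ∀ {y : Fin (2 * n)}, y ≠ 0 → 0 < y.val := by
      intro y hy
      rcases Nat.eq_zero_or_pos y.val with h0 | h0
      · exact absurd (Fin.ext h0) hy
      · exact h0
    have hd_pos : ∀ x : Fin (2 * k), 0 < (f (x + 1) - f x).val := by
      intro x
      apply hvalpos
      exact sub_ne_zero.mpr (fun hc => hsucc_ne x (hinj hc))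
    have hcyc : ∀ (x c : Fin (2 * k)), c ≠ x → c ≠ x + 1 →
        cyclicSbtw (f x) (f (x + 1)) (f c) := by
      intro x c hcx hcx1
      apply hmono
      rw [cyclicSbtw_iff]
      have h1 : (x + 1 - x : Fin (2 * k)) = 1 := add_sub_cancel_left x 1
      rw [h1, hone2k]
      have hne0 : (c - x : Fin (2 * k)) ≠ 0 := sub_ne_zero.mpr hcx
      have hvne : (c - x).val ≠ 0 := fun hc => hne0 (Fin.ext (by rw [hc]; rfl))
      have hvne1 : (c - x).val ≠ 1 := by
        intro hc
        apply hcx1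
        have : (c - x : Fin (2 * k)) = 1 := Fin.ext (by rw [hc, hone2k])
        rw [sub_eq_iff_eq_add] at this
        rw [this, add_comm]
      omega
    have hgap : ∀ (x : Fin (2 * k)) (t : ℕ), 0 < t → t < (f (x + 1) - f x).val →
        (f x + (t : Fin (2 * n))) ∉ R := by
      rintro x t ht htd ⟨c, hc⟩
      have hdlt : (f (x + 1) - f x).val < 2 * n := (f (x + 1) - f x).isLt
      have htlt : t < 2 * n := by omega
      have hval : ((t : Fin (2 * n))).val = t := Fin.val_cast_of_lt htlt
      have hsub : f c - f x = (t : Fin (2 * n)) := by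
        rw [hc]; exact add_sub_cancel_left _ _
      have hcnex : c ≠ x := by
        intro hce
        rw [hce] at hc
        have h0 : (t : Fin (2 * n)) = 0 := by
          apply add_left_cancel (a := f x)
          rw [← hc, add_zero]
        rw [h0] at hval
        simp at hval
        omega
      have hcnex1 : c ≠ x + 1 := by
        intro hce
        rw [hce] at hsub
        rw [hsub] at htd
        rw [hval] at htd
        omega
      have := hcyc x c hcnex hcnex1
      rw [cyclicSbtw_iff] at this
      rw [hsub, hval] at this
      omega
    have hwalk : ∀ x : Fin (2 * k), ∃ m : ℕ, (σ ^ m) (f x + 1) = f (x + 1) := by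
      intro x
      set d := (f (x + 1) - f x).val with hd
      have hd1 : 1 ≤ d := hd_pos x
      have claim : ∀ j : ℕ, j + 1 ≤ d → (σ ^ j) (f x + 1) = f x + (((j : ℕ) + 1 : ℕ) : Fin (2 * n)) := by
        intro j
        induction j with
        | zero => intro _; simp
        | succ j ih =>
          intro hjd
          have hj := ih (by omega)
          have hnot : (f x + (((j : ℕ) + 1 : ℕ) : Fin (2 * n))) ∉ R :=
            hgap x (j + 1) (by omega) (by omega)
          rw [pow_succ', Equiv.Perm.mul_apply, hj, hσc _ hnot]
          push_cast
          ring
      refine ⟨d - 1, ?_⟩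
      have := claim (d - 1) (by omega)
      rw [this]
      have hdd : ((d - 1 : ℕ) + 1 : ℕ) = d := by omega
      rw [hdd, hd, Fin.cast_val_eq_self, add_sub_cancel]
    have hstep : ∀ x : Fin (2 * k), ∃ m : ℕ, (σ ^ (m + 1)) (f x) = f (P.boundary x) := by
      intro x
      have hfx : σ (f x) = f (P.τ x) + 1 := by
        rw [hσR (f x) ⟨x, rfl⟩, hcomm]
      obtain ⟨m, hm⟩ := hwalk (P.τ x)
      refine ⟨m, ?_⟩
      have hbP : P.boundary x = P.τ x + 1 := by
        show finRotate (2 * k) (P.τ x) = P.τ x + 1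
        exact rot_apply _
      rw [pow_succ, Equiv.Perm.mul_apply, hfx, hm, hbP]
    have horb : ∀ (m : ℕ) (x : Fin (2 * k)),
        (Quotient.mk (MulAction.orbitRel (Subgroup.zpowers σ) (Fin (2 * n)))
          (f ((P.boundary ^ m) x))) = Quotient.mk _ (f x) := by
      intro m
      induction m with
      | zero => intro x; rfl
      | succ m ih =>
        intro x
        have hpow : (P.boundary ^ (m + 1)) x = P.boundary ((P.boundary ^ m) x) := by
          rw [pow_succ', Equiv.Perm.mul_apply]
        rw [hpow]
        obtain ⟨j, hj⟩ := hstep ((P.boundary ^ m) x)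
        rw [← hj]
        exact (quot_eq_of_mem (pow_mem (mem_zpowers σ) (j + 1)) _).trans (ih x)
    have wd : ∀ x y : Fin (2 * k),
        (MulAction.orbitRel (Subgroup.zpowers P.boundary) (Fin (2 * k))).r x y →
        (Quotient.mk (MulAction.orbitRel (Subgroup.zpowers σ) (Fin (2 * n))) (f x))
          = Quotient.mk _ (f y) := by
      intro x y hxy
      have hq : (Quotient.mk (MulAction.orbitRel (Subgroup.zpowers P.boundary) (Fin (2 * k))) x)
          = Quotient.mk _ y := Quotient.sound hxy
      rw [rel_iff_exists_pow] at hq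
      obtain ⟨m, rfl⟩ := hq
      exact horb m y
    set Φ : Quotient (MulAction.orbitRel (Subgroup.zpowers P.boundary) (Fin (2 * k))) →
        Quotient (MulAction.orbitRel (Subgroup.zpowers σ) (Fin (2 * n))) :=
      Quotient.lift _ wd with hΦ
    have hreach : ∀ (t : ℕ) (y : Fin (2 * n)), y + (t : Fin (2 * n)) ∈ R →
        ∃ m : ℕ, (σ ^ m) y ∈ R := by
      intro t
      induction t with
      | zero =>
        intro y hy
        simp only [Nat.cast_zero, add_zero] at hy
        exact ⟨0, by simpa using hy⟩
      | succ t ih =>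
        intro y hy
        by_cases hyR : y ∈ R
        · exact ⟨0, by simpa using hyR⟩
        · have : (y + 1) + (t : Fin (2 * n)) ∈ R := by
            have heq : (y + 1) + (t : Fin (2 * n)) = y + ((t + 1 : ℕ) : Fin (2 * n)) := by
              push_cast; ring
            rw [heq]; exact hy
          obtain ⟨m, hm⟩ := ih (y + 1) this
          refine ⟨m + 1, ?_⟩
          rw [pow_succ, Equiv.Perm.mul_apply, hσc y hyR]
          exact hm
    have hsurj : Function.Surjective Φ := by
      intro q
      refine Quotient.inductionOn q ?_
      intro y
      have hf0 : y + ((f 0 - y).val : Fin (2 * n)) ∈ R := by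
        rw [Fin.cast_val_eq_self, add_sub_cancel]
        exact ⟨0, rfl⟩
      obtain ⟨m, hm⟩ := hreach ((f 0 - y).val) y hf0
      obtain ⟨a, ha⟩ := hm
      refine ⟨Quotient.mk _ a, ?_⟩
      show (Quotient.mk (MulAction.orbitRel (Subgroup.zpowers σ) (Fin (2 * n))) (f a))
          = Quotient.mk _ y
      rw [ha]
      exact quot_eq_of_mem (pow_mem (mem_zpowers σ) m) y
    have hcard : orbCount σ ≤
        Nat.card (Quotient (MulAction.orbitRel (Subgroup.zpowers P.boundary) (Fin (2 * k)))) :=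
      Nat.card_le_card_of_surjective Φ hsurj
    have hFP : P.F =
        Nat.card (Quotient (MulAction.orbitRel (Subgroup.zpowers P.boundary) (Fin (2 * k)))) := by
      rw [ChordDiagram.F, if_neg hk0]
    omega
  constructor
  · omega
  · intro hle
    omega
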